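/- Let q ≥ 4 be a prime power. Then every nonzero vector of F_q³ is a linear combination of at most 3 vectors of the truncated conic C* = {(1, a, a²) : a ∈ F_q, a ≠ 0}. In particular, the points (1,0,0) and (0,0,1) of PG(2,q) are linear combinations of at most 3 points of C*. -/

import Mathlib

/-- `v` is a linear combination of at most `k` vectors of the set `S`. -/
def IsCombOfAtMost {F : Type} [Field F] {d : ℕ} (S : Set (Fin d → F)) (k : ℕ)
    (v : Fin d → F) : Prop :=
  ∃ (t : Finset (Fin d → F)) (c : (Fin d → F) → F),
    ↑t ⊆ S ∧ t.card ≤ k ∧ v = ∑ w ∈ t, c w • w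

/-- The truncated conic `C* = {(1, a, a²) : a ∈ F_q, a ≠ 0}`. -/
def truncConic (F : Type) [Field F] : Set (Fin 3 → F) :=
  {w | ∃ a : F, a ≠ 0 ∧ w = ![1, a, a ^ 2]}

lemma key {F : Type} [Field F] (a b c : F) (ha : a ≠ 0) (hb : b ≠ 0) (hc : c ≠ 0)
    (hab : a ≠ b) (hac : a ≠ c) (hbc : b ≠ c) (v : Fin 3 → F) :
    IsCombOfAtMost (truncConic F) 3 v := by
  classical
  set w1 : Fin 3 → F := ![1, a, a ^ 2] with hw1
  set w2 : Fin 3 → F := ![1, b, b ^ 2] with hw2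
  set w3 : Fin 3 → F := ![1, c, c ^ 2] with hw3
  have h12 : w1 ≠ w2 := by
    intro h; exact hab (by simpa [hw1, hw2] using congrFun h 1)
  have h13 : w1 ≠ w3 := by
    intro h; exact hac (by simpa [hw1, hw3] using congrFun h 1)
  have h23 : w2 ≠ w3 := by
    intro h; exact hbc (by simpa [hw2, hw3] using congrFun h 1)
  set c1 : F := (b * c * v 0 - (b + c) * v 1 + v 2) / ((a - b) * (a - c)) with hc1
  set c2 : F := (a * c * v 0 - (a + c) * v 1 + v 2) / ((b - a) * (b - c)) with hc2
  set c3 : F := (a * b * v 0 - (a + b) * v 1 + v 2) / ((c - a) * (c - b)) with hc3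
  refine ⟨{w1, w2, w3}, fun w => if w = w1 then c1 else if w = w2 then c2 else c3,
    ?_, ?_, ?_⟩
  · intro w hw
    simp only [Finset.coe_insert, Finset.coe_singleton, Set.mem_insert_iff,
      Set.mem_singleton_iff] at hw
    rcases hw with h | h | h
    · exact ⟨a, ha, h⟩
    · exact ⟨b, hb, h⟩
    · exact ⟨c, hc, h⟩
  · calc ({w1, w2, w3} : Finset _).card ≤ ({w2, w3} : Finset _).card + 1 :=
        Finset.card_insert_le _ _
      _ ≤ (({w3} : Finset _).card + 1) + 1 := by
        have := Finset.card_insert_le w2 ({w3} : Finset (Fin 3 → F)); omega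
      _ ≤ 3 := by simp
  · rw [Finset.sum_insert (by simp [h12, h13]),
      Finset.sum_insert (by simp [h23]), Finset.sum_singleton]
    simp only [if_pos rfl, if_neg h12.symm, if_neg h13.symm, if_neg h23.symm, if_neg h12, if_neg h13, if_neg h23, if_true]
    have hab' : a - b ≠ 0 := sub_ne_zero.mpr hab
    have hac' : a - c ≠ 0 := sub_ne_zero.mpr hac
    have hbc' : b - c ≠ 0 := sub_ne_zero.mpr hbc
    have hba' : b - a ≠ 0 := sub_ne_zero.mpr hab.symm
    have hca' : c - a ≠ 0 := sub_ne_zero.mpr hac.symm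
    have hcb' : c - b ≠ 0 := sub_ne_zero.mpr hbc.symm
    have e0 : v ⟨0, by omega⟩ = v 0 := rfl
    have e1 : v ⟨1, by omega⟩ = v 1 := rfl
    have e2 : v ⟨2, by omega⟩ = v 2 := rfl
    funext i
    fin_cases i <;>
      simp only [e0, e1, e2] <;>
      simp only [hw1, hw2, hw3, hc1, hc2, hc3, Pi.add_apply, Pi.smul_apply,
        Matrix.cons_val_zero, Matrix.cons_val_one, Matrix.head_cons,
        Matrix.cons_val_two, Matrix.tail_cons, smul_eq_mul, Fin.zero_eta, Fin.mk_one, Matrix.cons_val, show (⟨2, by omega⟩ : Fin 3) = 2 from rfl] <;>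
      field_simp <;> ring

theorem stmt6 (q : ℕ) (F : Type) [Field F] [Fintype F] (hF : Fintype.card F = q)
    (hq : 4 ≤ q) :
    (∀ v : Fin 3 → F, v ≠ 0 → IsCombOfAtMost (truncConic F) 3 v)
    ∧ IsCombOfAtMost (truncConic F) 3 ![1, 0, 0]
    ∧ IsCombOfAtMost (truncConic F) 3 ![0, 0, 1] := by
  classical
  -- find three distinct nonzero elements
  have hcard : 3 ≤ (Finset.univ.erase (0 : F)).card := by
    rw [Finset.card_erase_of_mem (Finset.mem_univ _), Finset.card_univ, hF]
    omega
  obtain ⟨a, haS⟩ : (Finset.univ.erase (0 : F)).Nonempty :=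
    Finset.card_pos.mp (by omega)
  have h2 : 2 ≤ ((Finset.univ.erase (0 : F)).erase a).card := by
    rw [Finset.card_erase_of_mem haS]; omega
  obtain ⟨b, hbS⟩ : ((Finset.univ.erase (0 : F)).erase a).Nonempty :=
    Finset.card_pos.mp (by omega)
  have h1 : 1 ≤ (((Finset.univ.erase (0 : F)).erase a).erase b).card := by
    rw [Finset.card_erase_of_mem hbS]; omega
  obtain ⟨c, hcS⟩ : (((Finset.univ.erase (0 : F)).erase a).erase b).Nonempty :=
    Finset.card_pos.mp (by omega)
  have ha : a ≠ 0 := Finset.ne_of_mem_erase haS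
  have hb : b ≠ 0 := Finset.ne_of_mem_erase (Finset.mem_of_mem_erase hbS)
  have hc : c ≠ 0 :=
    Finset.ne_of_mem_erase (Finset.mem_of_mem_erase (Finset.mem_of_mem_erase hcS))
  have hba : b ≠ a := Finset.ne_of_mem_erase hbS
  have hcb : c ≠ b := Finset.ne_of_mem_erase hcS
  have hca : c ≠ a := Finset.ne_of_mem_erase (Finset.mem_of_mem_erase hcS)
  exact ⟨fun v _ => key a b c ha hb hc hba.symm hca.symm hcb.symm v,
    key a b c ha hb hc hba.symm hca.symm hcb.symm _,
    key a b c ha hb hc hba.symm hca.symm hcb.symm _⟩
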